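/- For all real β > 0 and all real Δ > 0, the Fourier transforms of the restrictions of m⁺_{β,Δ} and m⁻_{β,Δ} to the real line satisfy: (i) they vanish for every real ξ with |ξ| > Δ; and (ii) for every real ξ with |ξ| ≤ Δ, the Fourier transform of m^±_{β,Δ} at ξ equals π·(e^{2πβ(Δ − |ξ|)} − e^{−2πβ(Δ − |ξ|)})/(e^{πβΔ} ∓ e^{−πβΔ})². -/

import Mathlib

open scoped Real FourierTransform
open MeasureTheory Set Filter Complex

lemma integrableOn_cexp_Ioi {c : ℂ} (hc : 0 < c.re) :
    IntegrableOn (fun x : ℝ => Complex.exp (-c * x)) (Ioi (0:ℝ)) := by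
  apply Integrable.mono' (g := fun x : ℝ => Real.exp (-c.re * x))
  · exact (exp_neg_integrableOn_Ioi 0 hc)
  · exact (Complex.continuous_exp.comp (by continuity)).aestronglyMeasurable
  · filter_upwards with x
    rw [Complex.norm_exp]
    simp [Complex.mul_re]

lemma integral_cexp_Ioi {c : ℂ} (hc : 0 < c.re) :
    ∫ x : ℝ in Ioi (0:ℝ), Complex.exp (-c * x) = 1 / c := by
  have hc0 : c ≠ 0 := fun h => by simp [h] at hc
  have := integral_Ioi_of_hasDerivAt_of_tendsto
    (f := fun x : ℝ => -Complex.exp (-c * x) / c) (f' := fun x : ℝ => Complex.exp (-c * x))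
    (a := 0) (m := 0) ?_ ?_ (integrableOn_cexp_Ioi hc) ?_
  · rw [this]; simp [neg_div]
  · exact (Continuous.div_const (by continuity) c).continuousWithinAt
  · intro x hx
    have h1 : HasDerivAt (fun x : ℝ => -c * (x:ℂ)) (-c) x := by
      simpa using ((hasDerivAt_id (x:ℂ)).const_mul (-c)).comp_ofReal
    have := (h1.cexp.neg).div_const c
    convert this using 1
    all_goals try rfl
    field_simp
  · rw [show (0:ℂ) = -0/c by simp]
    apply Tendsto.div_const
    apply Tendsto.neg
    rw [show (0:ℂ) = 0 from rfl]
    apply tendsto_zero_iff_norm_tendsto_zero.2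
    have : (fun x : ℝ => ‖Complex.exp (-c * x)‖) = fun x : ℝ => Real.exp (-c.re * x) := by
      ext x; rw [Complex.norm_exp]; simp [Complex.mul_re]
    rw [this]
    have h2 : Tendsto (fun x : ℝ => -c.re * x) atTop atBot := by
      have h3 : Tendsto (fun x : ℝ => c.re * x) atTop atTop :=
        Tendsto.const_mul_atTop hc tendsto_id
      have := tendsto_neg_atTop_atBot.comp h3
      exact this.congr (fun x => by simp [Function.comp])
    exact Real.tendsto_exp_atBot.comp h2

lemma integral_cexp_Iic {c : ℂ} (hc : 0 < c.re) :
    ∫ x : ℝ in Iic (0:ℝ), Complex.exp (c * x) = 1 / c := by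
  have h := integral_comp_neg_Iic (0:ℝ) (fun x : ℝ => Complex.exp (-c * x))
  simp only [neg_zero] at h
  rw [← integral_cexp_Ioi hc, ← h]
  congr 1 with x
  push_cast
  ring_nf

lemma integrable_exp_neg_abs (b : ℝ) (hb : 0 < b) :
    Integrable (fun x : ℝ => Real.exp (-(b * |x|))) := by
  have hIoi : IntegrableOn (fun x : ℝ => Real.exp (-(b * |x|))) (Ioi (0:ℝ)) := by
    apply (exp_neg_integrableOn_Ioi 0 hb).congr_fun _ measurableSet_Ioi
    intro x hx
    show Real.exp (-b * x) = Real.exp (-(b * |x|))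
    rw [abs_of_pos hx, neg_mul]
  have hIic : IntegrableOn (fun x : ℝ => Real.exp (-(b * |x|))) (Iic (0:ℝ)) := by
    rw [← Measure.map_neg_eq_self (volume : Measure ℝ)]
    have m : MeasurableEmbedding fun x : ℝ => -x := (Homeomorph.neg ℝ).measurableEmbedding
    rw [m.integrableOn_map_iff]
    simp_rw [Function.comp_def, abs_neg, neg_preimage, neg_Iic, neg_zero]
    exact (integrableOn_Ici_iff_integrableOn_Ioi).mpr hIoi
  rw [← integrableOn_univ, ← Iic_union_Ioi (a := (0:ℝ))]
  exact hIic.union hIoi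

lemma F1 (β : ℝ) (hβ : 0 < β) (ξ : ℝ) :
    𝓕 (fun x : ℝ => ((Real.exp (-(2 * π * β * |x|)) : ℝ) : ℂ)) ξ
      = ((β / (π * (β ^ 2 + ξ ^ 2)) : ℝ) : ℂ) := by
  have hb : 0 < 2 * π * β := by positivity
  set c₁ : ℂ := 2 * π * β + 2 * π * ξ * Complex.I with hc₁
  set c₂ : ℂ := 2 * π * β - 2 * π * ξ * Complex.I with hc₂
  have hc₁re : 0 < c₁.re := by simp [hc₁]; positivity
  have hc₂re : 0 < c₂.re := by simp [hc₂]; positivity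
  have hint : Integrable (fun x : ℝ =>
      Real.fourierChar (-(x * ξ)) • ((Real.exp (-(2 * π * β * |x|)) : ℝ) : ℂ)) := by
    have := (Real.fourierIntegral_convergent_iff (f := fun x : ℝ =>
      ((Real.exp (-(2 * π * β * |x|)) : ℝ) : ℂ)) (V := ℝ) ξ).2
      ((integrable_exp_neg_abs _ hb).ofReal)
    simpa [real_inner_comm, mul_comm] using this
  rw [Real.fourier_real_eq]
  rw [← integral_add_compl (measurableSet_Iic (a := (0:ℝ))) hint, compl_Iic]
  have e₁ : ∫ x in Ioi (0:ℝ), Real.fourierChar (-(x * ξ)) •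
      ((Real.exp (-(2 * π * β * |x|)) : ℝ) : ℂ) = 1 / c₁ := by
    rw [← integral_cexp_Ioi hc₁re]
    apply setIntegral_congr_fun measurableSet_Ioi
    intro x hx
    show Real.fourierChar (-(x * ξ)) • ((Real.exp (-(2 * π * β * |x|)) : ℝ) : ℂ)
      = Complex.exp (-c₁ * x)
    rw [Circle.smul_def, Real.fourierChar_apply, abs_of_pos hx, Complex.ofReal_exp,
      smul_eq_mul, ← Complex.exp_add]
    congr 1
    push_cast
    ring
  have e₂ : ∫ x in Iic (0:ℝ), Real.fourierChar (-(x * ξ)) •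
      ((Real.exp (-(2 * π * β * |x|)) : ℝ) : ℂ) = 1 / c₂ := by
    rw [← integral_cexp_Iic hc₂re]
    apply setIntegral_congr_fun measurableSet_Iic
    intro x hx
    show Real.fourierChar (-(x * ξ)) • ((Real.exp (-(2 * π * β * |x|)) : ℝ) : ℂ)
      = Complex.exp (c₂ * x)
    rw [Circle.smul_def, Real.fourierChar_apply, _root_.abs_of_nonpos hx, Complex.ofReal_exp,
      smul_eq_mul, ← Complex.exp_add]
    congr 1
    push_cast
    ring
  rw [e₁, e₂]
  have hc₁0 : c₁ ≠ 0 := fun h => by rw [h] at hc₁re; simp at hc₁re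
  have hc₂0 : c₂ ≠ 0 := fun h => by rw [h] at hc₂re; simp at hc₂re
  have hd : (β:ℂ) ^ 2 + (ξ:ℂ) ^ 2 ≠ 0 := by
    intro h
    have : ((β ^ 2 + ξ ^ 2 : ℝ) : ℂ) = 0 := by push_cast; linear_combination h
    rw [Complex.ofReal_eq_zero] at this
    nlinarith
  have hπ : (π:ℂ) ≠ 0 := by exact_mod_cast Real.pi_ne_zero
  push_cast
  rw [div_add_div _ _ hc₂0 hc₁0, div_eq_div_iff (mul_ne_zero hc₂0 hc₁0) (by
    exact mul_ne_zero hπ hd)]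
  simp only [hc₁, hc₂]
  ring_nf
  rw [Complex.I_sq]
  ring

lemma integrable_poisson (β : ℝ) (hβ : 0 < β) (c : ℝ) :
    Integrable (fun x : ℝ => c * β / (β ^ 2 + x ^ 2)) := by
  have h0 : Integrable (fun x : ℝ => (1 + (x / β) ^ 2)⁻¹) :=
    integrable_inv_one_add_sq.comp_div hβ.ne'
  apply (h0.const_mul (c / β)).congr
  filter_upwards with x
  have hd : β ^ 2 + x ^ 2 ≠ 0 := by positivity
  have h1 : (1 + (x / β) ^ 2)⁻¹ = β ^ 2 / (β ^ 2 + x ^ 2) := by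
    have h2 : 1 + (x / β) ^ 2 = (β ^ 2 + x ^ 2) / β ^ 2 := by field_simp
    rw [h2, inv_div]
  rw [h1, div_mul_div_comm, div_eq_div_iff (by positivity) hd]
  ring

lemma F2 (β : ℝ) (hβ : 0 < β) (ξ : ℝ) :
    𝓕 (fun x : ℝ => ((β / (β ^ 2 + x ^ 2) : ℝ) : ℂ)) ξ
      = ((π * Real.exp (-(2 * π * β * |ξ|)) : ℝ) : ℂ) := by
  have hb : 0 < 2 * π * β := by positivity
  set g : ℝ → ℂ := fun x : ℝ => ((Real.exp (-(2 * π * β * |x|)) : ℝ) : ℂ) with hgdef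
  have hg : Integrable g := (integrable_exp_neg_abs _ hb).ofReal
  have hcont : Continuous g := by
    apply Complex.continuous_ofReal.comp
    exact Real.continuous_exp.comp (by continuity)
  have hFg_eq : 𝓕 g = fun ξ : ℝ => ((β / (π * (β ^ 2 + ξ ^ 2)) : ℝ) : ℂ) :=
    funext (F1 β hβ)
  have hFg_int : Integrable (𝓕 g) := by
    rw [hFg_eq]
    apply Integrable.ofReal
    apply (integrable_poisson β hβ π⁻¹).congr
    filter_upwards with x
    show π⁻¹ * β / (β ^ 2 + x ^ 2) = β / (π * (β ^ 2 + x ^ 2))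
    rw [inv_mul_eq_div, div_div]
  have hinv : 𝓕⁻ (𝓕 g) = g := hcont.fourierInv_fourier_eq hg hFg_int
  have key : (fun x : ℝ => ((β / (β ^ 2 + x ^ 2) : ℝ) : ℂ))
      = fun x : ℝ => (π : ℂ) • (𝓕 g x) := by
    ext x
    rw [hFg_eq]
    have hd : β ^ 2 + x ^ 2 ≠ 0 := by positivity
    rw [smul_eq_mul]
    push_cast
    have hπc : (π:ℂ) ≠ 0 := by exact_mod_cast Real.pi_ne_zero
    rw [mul_div_assoc', mul_div_mul_left _ _ hπc]
  rw [key]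
  have hsmul : 𝓕 (fun x : ℝ => (π : ℂ) • (𝓕 g x)) ξ = (π : ℂ) • 𝓕 (𝓕 g) ξ := by
    rw [Real.fourier_real_eq, Real.fourier_real_eq, ← integral_smul]
    congr 1 with x
    rw [smul_comm]
  rw [hsmul]
  have : 𝓕 (𝓕 g) ξ = g (-ξ) := by
    conv_rhs => rw [← hinv]
    rw [Real.fourierInv_eq_fourier_neg, neg_neg]
  rw [this]
  simp only [hgdef, abs_neg, smul_eq_mul]
  push_cast
  ring

lemma F3 (f : ℝ → ℂ) (θ ξ : ℝ) :
    𝓕 (fun x : ℝ => Complex.exp ((2 * π * θ * x : ℝ) * Complex.I) * f x) ξ = 𝓕 f (ξ - θ) := by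
  rw [Real.fourier_real_eq, Real.fourier_real_eq]
  congr 1 with x
  rw [Circle.smul_def, Circle.smul_def, Real.fourierChar_apply, Real.fourierChar_apply,
    smul_eq_mul, smul_eq_mul, ← mul_assoc, ← Complex.exp_add]
  congr 2
  push_cast
  ring

lemma twist_integrable {f : ℝ → ℂ} (hf : Integrable f) (ξ : ℝ) :
    Integrable fun x : ℝ => Real.fourierChar (-(x * ξ)) • f x := by
  have := (Real.fourierIntegral_convergent_iff (f := f) (V := ℝ) ξ).2 hf
  simpa [real_inner_comm, mul_comm] using this

lemma Fsmul (c : ℂ) (f : ℝ → ℂ) (ξ : ℝ) :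
    𝓕 (fun x : ℝ => c • f x) ξ = c • 𝓕 f ξ := by
  rw [Real.fourier_real_eq, Real.fourier_real_eq, ← integral_smul]
  congr 1 with x
  rw [smul_comm]

lemma Fmain (β Δ : ℝ) (hβ : 0 < β) (hΔ : 0 < Δ) (C : ℝ) (hC : C ≠ 0) (ξ : ℝ) :
    𝓕 (fun x : ℝ => (((β / (β ^ 2 + x ^ 2)) *
        ((Real.exp (2 * π * β * Δ) + Real.exp (-(2 * π * β * Δ)) -
          2 * Real.cos (2 * π * Δ * x)) / C) : ℝ) : ℂ)) ξ
      = ((((Real.exp (2 * π * β * Δ) + Real.exp (-(2 * π * β * Δ))) *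
            (π * Real.exp (-(2 * π * β * |ξ|)))
          - π * Real.exp (-(2 * π * β * |ξ - Δ|))
          - π * Real.exp (-(2 * π * β * |ξ + Δ|))) / C : ℝ) : ℂ) := by
  set A : ℝ := Real.exp (2 * π * β * Δ) + Real.exp (-(2 * π * β * Δ)) with hA
  set P : ℝ → ℂ := fun x : ℝ => ((β / (β ^ 2 + x ^ 2) : ℝ) : ℂ) with hP
  set f₁ : ℝ → ℂ := fun x : ℝ => Complex.exp ((2 * π * Δ * x : ℝ) * Complex.I) * P x with hf₁
  set f₂ : ℝ → ℂ := fun x : ℝ => Complex.exp ((2 * π * (-Δ) * x : ℝ) * Complex.I) * P x with hf₂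
  have hPint : Integrable P := by
    apply Integrable.ofReal
    have := integrable_poisson β hβ 1
    simp only [one_mul] at this
    exact this
  have hbdd : ∀ θ : ℝ, Integrable fun x : ℝ =>
      Complex.exp ((2 * π * θ * x : ℝ) * Complex.I) * P x := by
    intro θ
    apply hPint.bdd_mul (c := 1)
    · exact (Complex.continuous_exp.comp (by continuity)).aestronglyMeasurable
    · filter_upwards with x
      rw [Complex.norm_exp]
      simp
  have hdecomp : (fun x : ℝ => (((β / (β ^ 2 + x ^ 2)) *
        ((A - 2 * Real.cos (2 * π * Δ * x)) / C) : ℝ) : ℂ))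
      = fun x : ℝ => (C⁻¹ : ℂ) • ((A : ℂ) • P x - f₁ x - f₂ x) := by
    funext x
    simp only [hP, hf₁, hf₂, smul_eq_mul]
    have hcos : ((Real.cos (2 * π * Δ * x) : ℝ) : ℂ)
        = (Complex.exp ((2 * π * Δ * x : ℝ) * Complex.I)
           + Complex.exp ((2 * π * (-Δ) * x : ℝ) * Complex.I)) / 2 := by
      rw [Complex.exp_mul_I, Complex.exp_mul_I]
      have : ((2 * π * (-Δ) * x : ℝ) : ℂ) = -((2 * π * Δ * x : ℝ) : ℂ) := by push_cast; ring
      rw [this, Complex.cos_neg, Complex.sin_neg]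
      rw [Complex.ofReal_cos]
      ring
    have hd : ((β:ℂ) ^ 2 + (x:ℂ) ^ 2) ≠ 0 := by
      intro h
      have : ((β ^ 2 + x ^ 2 : ℝ) : ℂ) = 0 := by push_cast; linear_combination h
      rw [Complex.ofReal_eq_zero] at this
      nlinarith
    have hCc : (C:ℂ) ≠ 0 := by exact_mod_cast hC
    push_cast [hcos]
    field_simp
    ring
  rw [hdecomp, Fsmul]
  have hsub : 𝓕 (fun x : ℝ => (A : ℂ) • P x - f₁ x - f₂ x) ξ
      = (A : ℂ) • 𝓕 P ξ - 𝓕 f₁ ξ - 𝓕 f₂ ξ := by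
    rw [Real.fourier_real_eq, Real.fourier_real_eq,
      Real.fourier_real_eq, Real.fourier_real_eq]
    have : (fun x : ℝ => Real.fourierChar (-(x * ξ)) • ((A : ℂ) • P x - f₁ x - f₂ x))
        = fun x : ℝ => (A : ℂ) • (Real.fourierChar (-(x * ξ)) • P x)
            - Real.fourierChar (-(x * ξ)) • f₁ x - Real.fourierChar (-(x * ξ)) • f₂ x := by
      funext x
      rw [smul_sub, smul_sub, smul_comm]
    rw [this]
    have i1 : Integrable (fun x : ℝ => (A : ℂ) • (Real.fourierChar (-(x * ξ)) • P x)) := by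
      exact (twist_integrable hPint ξ).smul ((A : ℂ))
    have i2 : Integrable (fun x : ℝ => Real.fourierChar (-(x * ξ)) • f₁ x) :=
      twist_integrable (hbdd Δ) ξ
    have i3 : Integrable (fun x : ℝ => Real.fourierChar (-(x * ξ)) • f₂ x) :=
      twist_integrable (hbdd (-Δ)) ξ
    have i12 : Integrable (fun x : ℝ => (A : ℂ) • (Real.fourierChar (-(x * ξ)) • P x)
        - Real.fourierChar (-(x * ξ)) • f₁ x) := by exact i1.sub i2
    calc (∫ x : ℝ, (A : ℂ) • (Real.fourierChar (-(x * ξ)) • P x)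
            - Real.fourierChar (-(x * ξ)) • f₁ x - Real.fourierChar (-(x * ξ)) • f₂ x)
        = (∫ x : ℝ, (A : ℂ) • (Real.fourierChar (-(x * ξ)) • P x)
            - Real.fourierChar (-(x * ξ)) • f₁ x) - ∫ x : ℝ, Real.fourierChar (-(x * ξ)) • f₂ x :=
          integral_sub i12 i3
      _ = ((∫ x : ℝ, (A : ℂ) • (Real.fourierChar (-(x * ξ)) • P x))
            - ∫ x : ℝ, Real.fourierChar (-(x * ξ)) • f₁ x)
            - ∫ x : ℝ, Real.fourierChar (-(x * ξ)) • f₂ x := by rw [integral_sub i1 i2]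
      _ = ((A : ℂ) • (∫ x : ℝ, Real.fourierChar (-(x * ξ)) • P x)
            - ∫ x : ℝ, Real.fourierChar (-(x * ξ)) • f₁ x)
            - ∫ x : ℝ, Real.fourierChar (-(x * ξ)) • f₂ x := by rw [integral_smul]
  rw [hsub]
  have h₁ : 𝓕 f₁ ξ = 𝓕 P (ξ - Δ) := F3 P Δ ξ
  have h₂ : 𝓕 f₂ ξ = 𝓕 P (ξ + Δ) := by
    have := F3 P (-Δ) ξ
    rwa [sub_neg_eq_add] at this
  rw [h₁, h₂, F2 β hβ ξ, F2 β hβ (ξ - Δ), F2 β hβ (ξ + Δ)]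
  push_cast
  field_simp
  simp only [smul_eq_mul]
  ring

lemma alg_gt (β Δ ξ : ℝ) (hΔ : 0 < Δ) (h : Δ < |ξ|) :
    (Real.exp (2 * π * β * Δ) + Real.exp (-(2 * π * β * Δ))) *
        (π * Real.exp (-(2 * π * β * |ξ|)))
      - π * Real.exp (-(2 * π * β * |ξ - Δ|)) - π * Real.exp (-(2 * π * β * |ξ + Δ|)) = 0 := by
  have key : ∀ u w : ℝ, (Real.exp u + Real.exp (-u)) * (π * Real.exp (-w))
      - π * Real.exp (-(w - u)) - π * Real.exp (-(w + u)) = 0 := by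
    intro u w
    simp only [neg_sub, Real.exp_sub, Real.exp_neg, neg_add, Real.exp_add]
    have := Real.exp_ne_zero u
    have := Real.exp_ne_zero w
    field_simp
    ring
  rcases le_or_gt 0 ξ with h0 | h0
  · have hξ : Δ < ξ := by rwa [_root_.abs_of_nonneg h0] at h
    rw [_root_.abs_of_nonneg h0, abs_of_pos (by linarith : (0:ℝ) < ξ - Δ),
      abs_of_pos (by linarith : (0:ℝ) < ξ + Δ), mul_sub, mul_add]
    exact key (2 * π * β * Δ) (2 * π * β * ξ)
  · have hξ : ξ < -Δ := by rw [abs_of_neg h0] at h; linarith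
    rw [abs_of_neg h0, abs_of_neg (by linarith : ξ - Δ < 0),
      abs_of_neg (by linarith : ξ + Δ < 0), neg_sub,
      show 2 * π * β * (Δ - ξ) = 2 * π * β * (-ξ) + 2 * π * β * Δ by ring,
      show 2 * π * β * -(ξ + Δ) = 2 * π * β * (-ξ) - 2 * π * β * Δ by ring]
    linear_combination key (2 * π * β * Δ) (2 * π * β * (-ξ))

lemma alg_le (β Δ ξ : ℝ) (hΔ : 0 < Δ) (h : |ξ| ≤ Δ) :
    (Real.exp (2 * π * β * Δ) + Real.exp (-(2 * π * β * Δ))) *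
        (π * Real.exp (-(2 * π * β * |ξ|)))
      - π * Real.exp (-(2 * π * β * |ξ - Δ|)) - π * Real.exp (-(2 * π * β * |ξ + Δ|))
      = π * (Real.exp (2 * π * β * (Δ - |ξ|)) - Real.exp (-(2 * π * β * (Δ - |ξ|)))) := by
  have key : ∀ u v : ℝ, (Real.exp u + Real.exp (-u)) * (π * Real.exp (-v))
      - π * Real.exp (-(u - v)) - π * Real.exp (-(u + v))
      = π * (Real.exp (u - v) - Real.exp (-(u - v))) := by
    intro u v
    simp only [neg_sub, Real.exp_sub, Real.exp_neg, neg_add, Real.exp_add]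
    have := Real.exp_ne_zero u
    have := Real.exp_ne_zero v
    field_simp
    ring
  have habs : |ξ| ≤ Δ := h
  rcases le_or_gt 0 ξ with h0 | h0
  · have hξ : ξ ≤ Δ := by rwa [_root_.abs_of_nonneg h0] at h
    rw [_root_.abs_of_nonneg h0, _root_.abs_of_nonpos (by linarith : ξ - Δ ≤ 0),
      _root_.abs_of_nonneg (by linarith : (0:ℝ) ≤ ξ + Δ), neg_sub,
      show 2 * π * β * (Δ - ξ) = 2 * π * β * Δ - 2 * π * β * ξ by ring,
      show 2 * π * β * (ξ + Δ) = 2 * π * β * Δ + 2 * π * β * ξ by ring]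
    linear_combination key (2 * π * β * Δ) (2 * π * β * ξ)
  · have hξ : -Δ ≤ ξ := by rw [abs_of_neg h0] at h; linarith
    rw [abs_of_neg h0, abs_of_neg (by linarith : ξ - Δ < 0),
      _root_.abs_of_nonneg (by linarith : (0:ℝ) ≤ ξ + Δ), neg_sub,
      show 2 * π * β * (Δ - ξ) = 2 * π * β * Δ + 2 * π * β * (-ξ) by ring,
      show 2 * π * β * (ξ + Δ) = 2 * π * β * Δ - 2 * π * β * (-ξ) by ring,
      show 2 * π * β * (Δ - -ξ) = 2 * π * β * Δ - 2 * π * β * (-ξ) by ring]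
    linear_combination key (2 * π * β * Δ) (2 * π * β * (-ξ))


noncomputable def mPlus (β Δ x : ℝ) : ℝ :=
  (β / (β ^ 2 + x ^ 2)) *
    ((Real.exp (2 * π * β * Δ) + Real.exp (-(2 * π * β * Δ)) - 2 * Real.cos (2 * π * Δ * x)) /
      (Real.exp (π * β * Δ) - Real.exp (-(π * β * Δ))) ^ 2)

noncomputable def mMinus (β Δ x : ℝ) : ℝ :=
  (β / (β ^ 2 + x ^ 2)) *
    ((Real.exp (2 * π * β * Δ) + Real.exp (-(2 * π * β * Δ)) - 2 * Real.cos (2 * π * Δ * x)) /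
      (Real.exp (π * β * Δ) + Real.exp (-(π * β * Δ))) ^ 2)

theorem fourier_transforms (β Δ : ℝ) (hβ : 0 < β) (hΔ : 0 < Δ) :
    (∀ ξ : ℝ, Δ < |ξ| → 𝓕 (fun x : ℝ => (mPlus β Δ x : ℂ)) ξ = 0) ∧
    (∀ ξ : ℝ, Δ < |ξ| → 𝓕 (fun x : ℝ => (mMinus β Δ x : ℂ)) ξ = 0) ∧
    (∀ ξ : ℝ, |ξ| ≤ Δ → 𝓕 (fun x : ℝ => (mPlus β Δ x : ℂ)) ξ =
      ((π * ((Real.exp (2 * π * β * (Δ - |ξ|)) - Real.exp (-(2 * π * β * (Δ - |ξ|)))) /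
        (Real.exp (π * β * Δ) - Real.exp (-(π * β * Δ))) ^ 2) : ℝ) : ℂ)) ∧
    (∀ ξ : ℝ, |ξ| ≤ Δ → 𝓕 (fun x : ℝ => (mMinus β Δ x : ℂ)) ξ =
      ((π * ((Real.exp (2 * π * β * (Δ - |ξ|)) - Real.exp (-(2 * π * β * (Δ - |ξ|)))) /
        (Real.exp (π * β * Δ) + Real.exp (-(π * β * Δ))) ^ 2) : ℝ) : ℂ)) := by
  have hCp : (Real.exp (π * β * Δ) - Real.exp (-(π * β * Δ))) ^ 2 ≠ 0 := by
    have h1 : Real.exp (-(π * β * Δ)) < Real.exp (π * β * Δ) :=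
      Real.exp_lt_exp.mpr (by nlinarith [mul_pos (mul_pos Real.pi_pos hβ) hΔ])
    exact pow_ne_zero _ (sub_ne_zero.mpr (ne_of_gt h1))
  have hCm : (Real.exp (π * β * Δ) + Real.exp (-(π * β * Δ))) ^ 2 ≠ 0 := by positivity
  refine ⟨fun ξ hξ => ?_, fun ξ hξ => ?_, fun ξ hξ => ?_, fun ξ hξ => ?_⟩
  · simp only [mPlus]
    rw [Fmain β Δ hβ hΔ _ hCp ξ, alg_gt β Δ ξ hΔ hξ]
    norm_num
  · simp only [mMinus]
    rw [Fmain β Δ hβ hΔ _ hCm ξ, alg_gt β Δ ξ hΔ hξ]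
    norm_num
  · simp only [mPlus]
    rw [Fmain β Δ hβ hΔ _ hCp ξ, alg_le β Δ ξ hΔ hξ, mul_div_assoc]
  · simp only [mMinus]
    rw [Fmain β Δ hβ hΔ _ hCm ξ, alg_le β Δ ξ hΔ hξ, mul_div_assoc]
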